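/- Fix a ∈ ℝ with a ≠ 0 and let A be the 2×2 matrix with rows (0,1) and (1,0) (so A⁻¹ = A). If a < 0, then L₋(η)·A⁻¹ → (1, 0) as η → ∞; if a > 0, then L₋(η)·A⁻¹ → (1, −a)/√(1+a²) as η → ∞. -/

import Mathlib

noncomputable def Mmat (a η : ℝ) : Matrix (Fin 2) (Fin 2) ℝ :=
  !![-η * a, 1 + η; 1, 0]

noncomputable def lamP (a η : ℝ) : ℝ :=
  (-(a * η) + Real.sqrt (a ^ 2 * η ^ 2 + 4 * (η + 1))) / 2

noncomputable def lamM (a η : ℝ) : ℝ :=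
  (-(a * η) - Real.sqrt (a ^ 2 * η ^ 2 + 4 * (η + 1))) / 2

noncomputable def Lp (a η : ℝ) : Fin 2 → ℝ :=
  (Real.sqrt ((1 + η) ^ 2 + lamP a η ^ 2))⁻¹ • ![lamP a η, 1 + η]

noncomputable def Lm (a η : ℝ) : Fin 2 → ℝ :=
  (Real.sqrt ((1 + η) ^ 2 + lamM a η ^ 2))⁻¹ • ![lamM a η, 1 + η]

noncomputable def eucNorm (v : Fin 2 → ℝ) : ℝ :=
  Real.sqrt (v 0 ^ 2 + v 1 ^ 2)

noncomputable def Pmat (a η : ℝ) : Matrix (Fin 2) (Fin 2) ℝ :=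
  Matrix.of ![Lp a η, Lm a η]

def Amat : Matrix (Fin 2) (Fin 2) ℝ := !![0, 1; 1, 0]

open Filter Real

noncomputable def gfun : ℝ → Fin 2 → ℝ :=
  fun t => ![(Real.sqrt (1 + t ^ 2))⁻¹, t * (Real.sqrt (1 + t ^ 2))⁻¹]

lemma sqrt_one_add_sq_ne (t : ℝ) : Real.sqrt (1 + t ^ 2) ≠ 0 :=
  ne_of_gt (Real.sqrt_pos.mpr (by positivity))

lemma gfun_cont : Continuous gfun := by
  have h : Continuous fun t : ℝ => (Real.sqrt (1 + t ^ 2))⁻¹ :=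
    (Real.continuous_sqrt.comp (by continuity)).inv₀ sqrt_one_add_sq_ne
  apply continuous_pi
  intro i
  fin_cases i
  · simpa [gfun] using h
  · have h2 : Continuous fun t : ℝ => t * (Real.sqrt (1 + t ^ 2))⁻¹ := continuous_id.mul h
    simpa [gfun] using h2

lemma Amat_inv : Amat⁻¹ = Amat := by
  apply Matrix.inv_eq_right_inv
  simp [Amat, Matrix.mul_fin_two, Matrix.one_fin_two]

lemma key_eq (a : ℝ) {η : ℝ} (hη : 1 ≤ η) :
    Matrix.vecMul (Lm a η) Amat⁻¹ = gfun (lamM a η / (1 + η)) := by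
  have h1 : (0:ℝ) < 1 + η := by linarith
  set l := lamM a η with hl
  set r := l / (1 + η) with hr
  have hlr : l = r * (1 + η) := by rw [hr]; field_simp [h1.ne']
  have hn : Real.sqrt ((1 + η) ^ 2 + l ^ 2) = (1 + η) * Real.sqrt (1 + r ^ 2) := by
    rw [show (1 + η) ^ 2 + l ^ 2 = (1 + η) ^ 2 * (1 + r ^ 2) by rw [hlr]; ring,
      Real.sqrt_mul (by positivity), Real.sqrt_sq h1.le]
  have hs : Real.sqrt (1 + r ^ 2) ≠ 0 := sqrt_one_add_sq_ne r
  rw [Amat_inv]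
  funext i
  fin_cases i
  · have : Matrix.vecMul (Lm a η) Amat 0 = (Real.sqrt ((1 + η) ^ 2 + l ^ 2))⁻¹ * (1 + η) := by
      simp [Lm, Amat, Matrix.vecMul, dotProduct, Fin.sum_univ_two, ← hl]
    rw [show ((⟨0, by norm_num⟩ : Fin 2) : Fin 2) = 0 from rfl, this, hn]
    show _ = (Real.sqrt (1 + r ^ 2))⁻¹
    field_simp
  · have : Matrix.vecMul (Lm a η) Amat 1 = (Real.sqrt ((1 + η) ^ 2 + l ^ 2))⁻¹ * l := by
      simp [Lm, Amat, Matrix.vecMul, dotProduct, Fin.sum_univ_two, ← hl, mul_comm]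
    rw [show ((⟨1, by norm_num⟩ : Fin 2) : Fin 2) = 1 from rfl, this, hn, hlr]
    show _ = r * (Real.sqrt (1 + r ^ 2))⁻¹
    field_simp

lemma r_tendsto (a : ℝ) :
    Filter.Tendsto (fun η => lamM a η / (1 + η)) Filter.atTop
      (nhds ((-a - |a|) / 2)) := by
  have h1 : Filter.Tendsto (fun η : ℝ => η⁻¹) Filter.atTop (nhds 0) :=
    tendsto_inv_atTop_zero
  set F : ℝ → ℝ := fun t => (-a - Real.sqrt (a ^ 2 + 4 * t + 4 * t ^ 2)) / (2 * (1 + t)) with hF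
  have hFc : ContinuousAt F 0 := by
    apply ContinuousAt.div
    · exact (continuousAt_const.sub ((Real.continuous_sqrt.continuousAt).comp
        (by fun_prop)))
    · fun_prop
    · norm_num
  have hF0 : F 0 = (-a - |a|) / 2 := by
    simp [hF, Real.sqrt_sq_eq_abs]
  have hcomp := (hFc.tendsto.comp h1)
  rw [hF0] at hcomp
  apply hcomp.congr'
  filter_upwards [eventually_ge_atTop (1:ℝ)] with η hη
  have hηpos : (0:ℝ) < η := by linarith
  have hs : Real.sqrt (a ^ 2 * η ^ 2 + 4 * (η + 1))
      = η * Real.sqrt (a ^ 2 + 4 * η⁻¹ + 4 * η⁻¹ ^ 2) := by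
    rw [show a ^ 2 * η ^ 2 + 4 * (η + 1) = η ^ 2 * (a ^ 2 + 4 * η⁻¹ + 4 * η⁻¹ ^ 2) by
        field_simp; ring,
      Real.sqrt_mul (by positivity), Real.sqrt_sq hηpos.le]
  simp only [Function.comp, hF, lamM, hs]
  field_simp
  ring

theorem stmt15 (a : ℝ) (ha : a ≠ 0) :
    (a < 0 → Filter.Tendsto (fun η => Matrix.vecMul (Lm a η) Amat⁻¹)
      Filter.atTop (nhds ![1, 0])) ∧
    (0 < a → Filter.Tendsto (fun η => Matrix.vecMul (Lm a η) Amat⁻¹)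
      Filter.atTop (nhds ((Real.sqrt (1 + a ^ 2))⁻¹ • ![1, -a]))) := by
  have main : Filter.Tendsto (fun η => Matrix.vecMul (Lm a η) Amat⁻¹)
      Filter.atTop (nhds (gfun ((-a - |a|) / 2))) := by
    apply ((gfun_cont.tendsto _).comp (r_tendsto a)).congr'
    filter_upwards [eventually_ge_atTop (1:ℝ)] with η hη
    exact (key_eq a hη).symm
  constructor
  · intro hneg
    have habs : |a| = -a := abs_of_neg hneg
    have : gfun ((-a - |a|) / 2) = ![1, 0] := by
      rw [habs]
      funext i
      fin_cases i <;> simp [gfun]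
    rwa [this] at main
  · intro hpos
    have habs : |a| = a := abs_of_pos hpos
    have : gfun ((-a - |a|) / 2) = (Real.sqrt (1 + a ^ 2))⁻¹ • ![1, -a] := by
      rw [habs]
      have h2 : (-a - a) / 2 = -a := by ring
      rw [h2]
      funext i
      fin_cases i <;> simp [gfun] <;> ring
    rwa [this] at main
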